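/- Let G be a group, P a submonoid of G, and for p ∈ P let L_p be the isometry of ℓ²(P) determined by L_p δ_q = δ_{pq}. Let α = (p₁, p₂, …, p_{2k}) be an even-length word of elements of P (k ≥ 1) which is neutral, i.e. \mathring{α} = p₁p₂⁻¹⋯p_{2k-1}p_{2k}⁻¹ = e in G. Then L_{p₁}(L_{p₂})† ⋯ L_{p_{2k-1}}(L_{p_{2k}})† is the orthogonal projection of ℓ²(P) onto the closed linear span of { δ_s : s ∈ K(α) }. -/

import Mathlib

/-- The iterated right quotient `\mathring{α} = p₁p₂⁻¹p₃p₄⁻¹⋯p_{2k-1}p_{2k}⁻¹` of the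
even-length word `α = (p 1, p 2, …, p (2k))` (indices are `1`-based). -/
def wordQuotient {G : Type*} [Group G] (p : ℕ → G) (k : ℕ) : G :=
  ((List.range k).map fun i => p (2 * i + 1) * (p (2 * i + 2))⁻¹).prod

/-- The element `g_j = p_{2k}p_{2k-1}⁻¹p_{2k-2}p_{2k-3}⁻¹⋯p_{2j+2}p_{2j+1}⁻¹p_{2j}`
(for `1 ≤ j ≤ k`), so that `g_k = p_{2k}`. -/
def wordG {G : Type*} [Group G] (p : ℕ → G) (k j : ℕ) : G :=
  ((List.range (k - j)).map fun i => p (2 * k - 2 * i) * (p (2 * k - 2 * i - 1))⁻¹).prod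
    * p (2 * j)

/-- The constructible right ideal `K(α) = ⋂_{j=1}^{k} g_j P` of the word
`α = (p 1, …, p (2k))`. -/
def wordK {G : Type*} [Group G] (P : Submonoid G) (p : ℕ → G) (k : ℕ) : Set G :=
  {x : G | ∀ j : ℕ, 1 ≤ j → j ≤ k → ∃ q ∈ P, x = wordG p k j * q}

/-- The operator `L_α = L_{p₁}(L_{p₂})† L_{p₃}(L_{p₄})† ⋯ L_{p_{2k-1}}(L_{p_{2k}})†` on
`ℓ²(P)` associated to the even-length word `α = (w 1, …, w (2k))` of elements of `P`. -/
noncomputable def wordOp {G : Type*} [Group G] (P : Submonoid G)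
    (L : P → (lp (fun _ : P => ℂ) 2 →L[ℂ] lp (fun _ : P => ℂ) 2)) (w : ℕ → P) (k : ℕ) :
    lp (fun _ : P => ℂ) 2 →L[ℂ] lp (fun _ : P => ℂ) 2 :=
  ((List.range k).map fun i =>
    L (w (2 * i + 1)) * ContinuousLinearMap.adjoint (L (w (2 * i + 2)))).prod

section Aux

lemma coord_eq_inner' {ι : Type*} [DecidableEq ι] (v : lp (fun _ : ι => ℂ) 2) (r : ι) :
    v r = @inner ℂ _ _ (lp.single 2 r (1:ℂ) : lp (fun _ : ι => ℂ) 2) v := by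
  rw [lp.inner_single_left]; simp

lemma dense_span_single' {ι : Type*} [DecidableEq ι] :
    Dense ((Submodule.span ℂ {v : lp (fun _ : ι => ℂ) 2 | ∃ x : ι, v = lp.single 2 x 1} :
      Submodule ℂ (lp (fun _ : ι => ℂ) 2)) : Set (lp (fun _ : ι => ℂ) 2)) := by
  intro f
  have h : HasSum (fun i : ι => lp.single 2 i (f i)) f :=
    lp.hasSum_single (by norm_num) f
  refine mem_closure_of_tendsto h ?_
  filter_upwards with s
  refine Submodule.sum_mem _ fun i _ => ?_
  have : lp.single 2 i (f i) = f i • (lp.single 2 i (1:ℂ) : lp (fun _ : ι => ℂ) 2) := by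
    rw [← lp.single_smul]
    norm_num
  rw [this]
  exact Submodule.smul_mem _ _ (Submodule.subset_span ⟨i, rfl⟩)

variable {G : Type*} [Group G] [DecidableEq G] (P : Submonoid G)
  (L : P → (lp (fun _ : P => ℂ) 2 →L[ℂ] lp (fun _ : P => ℂ) 2))
  (hL : ∀ p q : P, L p (lp.single 2 q 1) = lp.single 2 (p * q) 1)

include hL in
lemma adj_single_of (p q : P) :
    ContinuousLinearMap.adjoint (L p) (lp.single 2 (p * q) 1) = lp.single 2 q 1 := by
  ext r
  rw [coord_eq_inner', coord_eq_inner', ContinuousLinearMap.adjoint_inner_right, hL,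
    lp.inner_single_left, lp.inner_single_left]
  simp only [RCLike.inner_apply, map_one, one_mul]
  rw [lp.single_apply, lp.single_apply]
  by_cases h : r = q
  · subst h; simp
  · have h2 : p * r ≠ p * q := fun hc => h (by
      exact_mod_cast mul_left_cancel (congrArg (Subtype.val) hc : (p:G) * r = (p:G) * q))
    simp [Pi.single_apply, h, h2]

include hL in
lemma adj_single_not (p x : P) (h : ∀ q : P, x ≠ p * q) :
    ContinuousLinearMap.adjoint (L p) (lp.single 2 x 1) = 0 := by
  ext r
  rw [coord_eq_inner', ContinuousLinearMap.adjoint_inner_right, hL, lp.inner_single_left]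
  simp only [RCLike.inner_apply, map_one, one_mul]
  have h2 : p * r ≠ x := fun hc => h r hc.symm
  simp [Pi.single_apply, h2]

lemma wordQuotient_zero (p : ℕ → G) : wordQuotient p 0 = 1 := rfl

lemma wordQuotient_succ (p : ℕ → G) (k : ℕ) :
    wordQuotient p (k + 1) = wordQuotient p k * (p (2 * k + 1) * (p (2 * k + 2))⁻¹) := by
  unfold wordQuotient
  rw [List.range_succ, List.map_append, List.prod_append]
  simp

lemma wordG_self (p : ℕ → G) (k : ℕ) : wordG p k k = p (2 * k) := by
  unfold wordG
  simp

lemma wordG_succ (p : ℕ → G) (k j : ℕ) (hj : j ≤ k) :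
    wordG p (k + 1) j = p (2 * k + 2) * (p (2 * k + 1))⁻¹ * wordG p k j := by
  unfold wordG
  have h1 : k + 1 - j = (k - j) + 1 := by omega
  rw [h1, List.range_succ_eq_map, List.map_cons, List.prod_cons, List.map_map, mul_assoc]
  have hmap : List.map
      ((fun i => p (2 * (k + 1) - 2 * i) * (p (2 * (k + 1) - 2 * i - 1))⁻¹) ∘ Nat.succ)
      (List.range (k - j)) =
      List.map (fun i => p (2 * k - 2 * i) * (p (2 * k - 2 * i - 1))⁻¹) (List.range (k - j)) := by
    apply List.map_congr_left
    intro i hi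
    simp only [Function.comp_apply, Nat.succ_eq_add_one]
    have e1 : 2 * (k + 1) - 2 * (i + 1) = 2 * k - 2 * i := by omega
    rw [e1]
  rw [hmap]
  have h2 : 2 * (k + 1) - 2 * 0 = 2 * k + 2 := by omega
  have h3 : 2 * k + 2 - 1 = 2 * k + 1 := by omega
  rw [h2, h3, mul_assoc]

lemma wordOp_zero (w : ℕ → P) : wordOp P L w 0 = 1 := rfl

lemma wordOp_succ (w : ℕ → P) (k : ℕ) :
    wordOp P L w (k + 1) =
      wordOp P L w k * (L (w (2 * k + 1)) * ContinuousLinearMap.adjoint (L (w (2 * k + 2)))) := by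
  unfold wordOp
  rw [List.range_succ, List.map_append, List.prod_append]
  simp

include hL in
lemma wordOp_single_mem (k : ℕ) (w : ℕ → P) :
    ∀ x y : P,
      (∀ j : ℕ, 1 ≤ j → j ≤ k → ∃ q ∈ P, (x : G) = wordG (fun i => (w i : G)) k j * q) →
      ((y : G) = wordQuotient (fun i => (w i : G)) k * x) →
      wordOp P L w k (lp.single 2 x 1) = lp.single 2 y 1 := by
  induction k with
  | zero =>
    intro x y _ hy
    rw [wordQuotient_zero, one_mul] at hy
    have hyx : y = x := Subtype.ext hy
    subst hyx
    rw [wordOp_zero]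
    rfl
  | succ k ih =>
    intro x y hx hy
    obtain ⟨q, hqP, hq⟩ := hx (k + 1) (by omega) le_rfl
    rw [wordG_self] at hq
    have h22 : 2 * (k + 1) = 2 * k + 2 := by ring
    rw [h22] at hq
    set q' : P := ⟨q, hqP⟩ with hq'def
    have hxq : x = w (2 * k + 2) * q' := Subtype.ext hq
    set x' : P := w (2 * k + 1) * q' with hx'def
    have hx'x : (x' : G) = (w (2 * k + 1) : G) * ((w (2 * k + 2) : G))⁻¹ * (x : G) := by
      have : (x' : G) = (w (2 * k + 1) : G) * q := by
        rw [hx'def]; push_cast; rfl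
      rw [this, hq]; group
    rw [wordOp_succ, ContinuousLinearMap.mul_apply, ContinuousLinearMap.mul_apply, hxq,
      adj_single_of P L hL, hL]
    refine ih x' y ?_ ?_
    · intro j hj1 hjk
      obtain ⟨r, hrP, hr⟩ := hx j hj1 (by omega)
      rw [wordG_succ _ _ _ hjk] at hr
      refine ⟨r, hrP, ?_⟩
      rw [hx'x, hr]
      group
    · rw [wordQuotient_succ] at hy
      rw [hx'x, hy]
      group

include hL in
lemma wordOp_single_not_mem (k : ℕ) (w : ℕ → P) :
    ∀ x : P,
      ¬ (∀ j : ℕ, 1 ≤ j → j ≤ k → ∃ q ∈ P, (x : G) = wordG (fun i => (w i : G)) k j * q) →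
      wordOp P L w k (lp.single 2 x 1) = 0 := by
  induction k with
  | zero =>
    intro x hx
    exact absurd (fun j hj1 hj0 => absurd (hj1.trans hj0) (by omega)) hx
  | succ k ih =>
    intro x hx
    by_cases hq : ∃ q ∈ P, (x : G) = (w (2 * k + 2) : G) * q
    · obtain ⟨q, hqP, hq⟩ := hq
      set q' : P := ⟨q, hqP⟩ with hq'def
      have hxq : x = w (2 * k + 2) * q' := Subtype.ext hq
      set x' : P := w (2 * k + 1) * q' with hx'def
      have hx'x : (x' : G) = (w (2 * k + 1) : G) * ((w (2 * k + 2) : G))⁻¹ * (x : G) := by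
        have : (x' : G) = (w (2 * k + 1) : G) * q := by
          rw [hx'def]; push_cast; rfl
        rw [this, hq]; group
      rw [wordOp_succ, ContinuousLinearMap.mul_apply, ContinuousLinearMap.mul_apply, hxq,
        adj_single_of P L hL, hL]
      refine ih x' ?_
      intro hx'
      apply hx
      intro j hj1 hjk
      rcases Nat.lt_or_ge j (k + 1) with hlt | hge
      · obtain ⟨r, hrP, hr⟩ := hx' j hj1 (by omega)
        refine ⟨r, hrP, ?_⟩
        rw [wordG_succ _ _ _ (by omega)]
        have hxx' : (x : G) = (w (2 * k + 2) : G) * ((w (2 * k + 1) : G))⁻¹ * (x' : G) := by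
          rw [hx'x]; group
        rw [hxx', hr]
        group
      · have hj : j = k + 1 := by omega
        subst hj
        refine ⟨q, hqP, ?_⟩
        rw [wordG_self]
        have h22 : 2 * (k + 1) = 2 * k + 2 := by ring
        rw [h22]
        exact hq
    · have hnone : ∀ r : P, x ≠ w (2 * k + 2) * r := by
        intro r hr
        exact hq ⟨r, r.2, by rw [hr]; push_cast; rfl⟩
      rw [wordOp_succ, ContinuousLinearMap.mul_apply, ContinuousLinearMap.mul_apply,
        adj_single_not P L hL _ _ hnone]
      simp

end Aux

/-- Let `G` be a group, `P` a submonoid of `G`, and `L_p` the isometry of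
`ℓ²(P)` determined by `L_p δ_q = δ_{pq}`.  Let `α = (w 1, …, w (2k))` be an even-length word
of elements of `P` (`k ≥ 1`) which is neutral, i.e. `\mathring{α} = e`.  Then
`L_{w 1}(L_{w 2})† ⋯ L_{w (2k-1)}(L_{w (2k)})†` is the orthogonal projection of `ℓ²(P)` onto
the closed linear span of `{δ_s : s ∈ K(α)}`. -/
theorem stmt_7 {G : Type*} [Group G] [DecidableEq G] (P : Submonoid G)
    (L : P → (lp (fun _ : P => ℂ) 2 →L[ℂ] lp (fun _ : P => ℂ) 2))
    (hL : ∀ p q : P, L p (lp.single 2 q 1) = lp.single 2 (p * q) 1)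
    (k : ℕ) (hk : 1 ≤ k) (w : ℕ → P)
    (hneutral : wordQuotient (fun i => (w i : G)) k = 1) :
    wordOp P L w k =
      (Submodule.span ℂ {v : lp (fun _ : P => ℂ) 2 |
          ∃ s : P, (s : G) ∈ wordK P (fun i => (w i : G)) k ∧
            v = lp.single 2 s 1}).topologicalClosure.subtypeL ∘L
        Submodule.orthogonalProjectionOnto (Submodule.span ℂ {v : lp (fun _ : P => ℂ) 2 |
          ∃ s : P, (s : G) ∈ wordK P (fun i => (w i : G)) k ∧
            v = lp.single 2 s 1}).topologicalClosure := by
  classical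
  set S := Submodule.span ℂ {v : lp (fun _ : P => ℂ) 2 |
      ∃ s : P, (s : G) ∈ wordK P (fun i => (w i : G)) k ∧ v = lp.single 2 s 1} with hS
  set M := S.topologicalClosure with hM
  apply ContinuousLinearMap.ext_on (dense_span_single' (ι := P))
  rintro v ⟨x, rfl⟩
  by_cases hx : (x : G) ∈ wordK P (fun i => (w i : G)) k
  · -- both sides are `δ_x`
    have hmem : (lp.single 2 x 1 : lp (fun _ : P => ℂ) 2) ∈ M :=
      S.le_topologicalClosure (Submodule.subset_span ⟨x, hx, rfl⟩)
    have hrhs : (M.subtypeL ∘L M.orthogonalProjectionOnto) (lp.single 2 x 1) = lp.single 2 x 1 := by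
      simp only [ContinuousLinearMap.comp_apply, Submodule.subtypeL_apply]
      exact Submodule.starProjection_eq_self_iff.2 hmem
    rw [hrhs]
    exact wordOp_single_mem P L hL k w x x hx (by rw [hneutral, one_mul])
  · -- both sides vanish
    have hlhs : wordOp P L w k (lp.single 2 x 1) = 0 :=
      wordOp_single_not_mem P L hL k w x hx
    have horth : (lp.single 2 x 1 : lp (fun _ : P => ℂ) 2) ∈ Mᗮ := by
      have hSle : S ≤ (ℂ ∙ (lp.single 2 x 1 : lp (fun _ : P => ℂ) 2))ᗮ := by
        rw [hS, Submodule.span_le]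
        rintro v ⟨s, hsK, rfl⟩
        rw [SetLike.mem_coe, Submodule.mem_orthogonal]
        intro u hu
        obtain ⟨c, rfl⟩ := Submodule.mem_span_singleton.1 hu
        rw [inner_smul_left]
        have hsx : s ≠ x := fun h => hx (h ▸ hsK)
        rw [lp.inner_single_left]
        simp only [RCLike.inner_apply, map_one, one_mul]
        rw [lp.single_apply]
        simp only [Pi.single_apply, hsx.symm, ↓reduceIte]
        simp
      have hMle : M ≤ (ℂ ∙ (lp.single 2 x 1 : lp (fun _ : P => ℂ) 2))ᗮ :=
        Submodule.topologicalClosure_minimal _ hSle (Submodule.isClosed_orthogonal _)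
      rw [Submodule.mem_orthogonal]
      intro u hu
      exact Submodule.inner_left_of_mem_orthogonal
        (Submodule.mem_span_singleton_self _) (hMle hu)
    have hrhs : (M.subtypeL ∘L M.orthogonalProjectionOnto) (lp.single 2 x 1) = 0 := by
      simp only [ContinuousLinearMap.comp_apply, Submodule.subtypeL_apply]
      rw [Submodule.orthogonalProjectionOnto_apply_of_mem_orthogonal horth]
      rfl
    rw [hlhs, hrhs]
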